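/- Work in A = ℂ[y₁,…,yₙ,x₁,…,x_p] with polynomials f₂,…,f_s ∈ A containing y_i² − y_i for every i. Let m be a positive natural number and set f₁ = (∑_{i=1}^n y_i) − m. Assume that: the system f₁ = 0, f₂ = 0, …, f_s = 0 has no common zero in ℂ^{n+p}; the system f₂ = 0,…,f_s = 0 is subset closed; and the quotient ring A/⟨f₂,…,f_s⟩ is Artinian. Then there exist polynomials β₁,…,β_s ∈ A with ∑_{i=1}^s β_i·f_i = 1 such that the monomials appearing with nonzero coefficient in β₁ are precisely the squarefree monomials y_b = ∏_{i : b_i = 1} y_i for b ∈ B. -/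

import Mathlib

open MvPolynomial

/-- The `y`-coordinate indicator condition: the vector `χ_d ∈ {0,1}ⁿ` (with
support `d`) arises as the `y`-coordinates of a common zero of the `f j`. -/
def InB (n p s : ℕ) (f : Fin s → MvPolynomial (Fin n ⊕ Fin p) ℂ)
    (d : Finset (Fin n)) : Prop :=
  ∃ z : (Fin n ⊕ Fin p) → ℂ, (∀ j : Fin s, eval z (f j) = 0) ∧
    ∀ i : Fin n, z (Sum.inl i) = if i ∈ d then 1 else 0

/-- The system `f₂ = 0,…,f_s = 0` is subset closed. -/
def SubsetClosed (n p s : ℕ) (f : Fin s → MvPolynomial (Fin n ⊕ Fin p) ℂ) : Prop :=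
  (∃ z : (Fin n ⊕ Fin p) → ℂ, (∀ j : Fin s, eval z (f j) = 0) ∧
      ∀ i : Fin n, z (Sum.inl i) = 0) ∧
  ∀ I : Finset (Fin n), InB n p s f I → ∀ J ⊆ I, InB n p s f J

noncomputable def gam (m : ℕ) : ℕ → ℂ
  | 0 => -1 / (m : ℂ)
  | (k+1) => -((k+1 : ℕ) : ℂ) * gam m k / (((k+1 : ℕ) : ℂ) - (m : ℂ))

lemma monomial_eq_prod (n p : ℕ) (b : Finset (Fin n)) (c : ℂ) :
    (monomial (∑ i ∈ b, Finsupp.single (Sum.inl i) 1) c : MvPolynomial (Fin n ⊕ Fin p) ℂ)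
      = C c * ∏ i ∈ b, X (Sum.inl i) := by
  classical
  induction b using Finset.induction with
  | empty => simp [MvPolynomial.monomial_zero', mul_comm]
  | insert _ _ h ih =>
      rw [Finset.sum_insert h, Finset.prod_insert h, ← mul_assoc, mul_comm (C c), mul_assoc,
        ← ih, X, monomial_mul, one_mul]

set_option maxHeartbeats 2000000 in
/-- Let `f₁ = (∑ yᵢ) − m` with `m > 0`.  If the full system
`f₁,…,f_s` has no common zero, the system `f₂,…,f_s` is subset closed and the
quotient by `⟨f₂,…,f_s⟩` is Artinian, then there is a Nullstellensatz
certificate `β₁·f₁ + ∑ βⱼ·fⱼ = 1` in which the monomials appearing in `β₁`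
are precisely the squarefree monomials `y_b` for `b ∈ B`. -/
theorem stmt6 (n p s : ℕ) (f : Fin s → MvPolynomial (Fin n ⊕ Fin p) ℂ)
    (hind : ∀ i : Fin n, ∃ j : Fin s,
      f j = (X (Sum.inl i)) ^ 2 - X (Sum.inl i))
    (m : ℕ) (hm : 0 < m)
    (hinf : ¬ ∃ z : (Fin n ⊕ Fin p) → ℂ,
      eval z ((∑ i : Fin n, X (Sum.inl i)) -
        (m : MvPolynomial (Fin n ⊕ Fin p) ℂ)) = 0 ∧
      ∀ j : Fin s, eval z (f j) = 0)
    (hclosed : SubsetClosed n p s f)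
    (hart : IsArtinianRing
      (MvPolynomial (Fin n ⊕ Fin p) ℂ ⧸ Ideal.span (Set.range f))) :
    ∃ (β₁ : MvPolynomial (Fin n ⊕ Fin p) ℂ)
      (β : Fin s → MvPolynomial (Fin n ⊕ Fin p) ℂ),
      β₁ * ((∑ i : Fin n, X (Sum.inl i)) -
          (m : MvPolynomial (Fin n ⊕ Fin p) ℂ)) +
        (∑ j : Fin s, β j * f j) = 1 ∧
      ∀ d : (Fin n ⊕ Fin p) →₀ ℕ,
        d ∈ β₁.support ↔
          ∃ b : Finset (Fin n), InB n p s f b ∧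
            d = ∑ i ∈ b, Finsupp.single (Sum.inl i) 1 := by
  classical
  set I : Ideal (MvPolynomial (Fin n ⊕ Fin p) ℂ) := Ideal.span (Set.range f) with hI
  set π : MvPolynomial (Fin n ⊕ Fin p) ℂ →+* MvPolynomial (Fin n ⊕ Fin p) ℂ ⧸ I := Ideal.Quotient.mk I with hπ
  set Y : Finset (Fin n) → MvPolynomial (Fin n ⊕ Fin p) ℂ ⧸ I := fun b => π (∏ i ∈ b, X (Sum.inl i)) with hY
  set Bs : Finset (Finset (Fin n)) := Finset.univ.filter (fun b => InB n p s f b) with hBs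
  set e : Finset (Fin n) → ((Fin n ⊕ Fin p) →₀ ℕ) :=
    fun b => ∑ i ∈ b, Finsupp.single (Sum.inl i) 1 with he
  set F₁ : MvPolynomial (Fin n ⊕ Fin p) ℂ := (∑ i : Fin n, X (Sum.inl i)) - (m : MvPolynomial (Fin n ⊕ Fin p) ℂ) with hF₁
  -- membership in Bs
  have hBs_mem : ∀ b : Finset (Fin n), b ∈ Bs ↔ InB n p s f b := by
    intro b; simp [hBs]
  -- ∅ ∈ Bs
  have hempty : ∅ ∈ Bs := by
    obtain ⟨z, hz1, hz2⟩ := hclosed.1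
    exact (hBs_mem ∅).2 ⟨z, hz1, fun i => by simp [hz2 i]⟩
  -- x² ≡ x
  have hX2 : ∀ i : Fin n, π (X (Sum.inl i) * X (Sum.inl i)) = π (X (Sum.inl i)) := by
    intro i
    obtain ⟨j, hj⟩ := hind i
    rw [hπ, Ideal.Quotient.eq]
    rw [show ((X (Sum.inl i) : MvPolynomial (Fin n ⊕ Fin p) ℂ) * X (Sum.inl i) - X (Sum.inl i)) = X (Sum.inl i) ^ 2 - X (Sum.inl i) by ring, ← hj]
    exact Ideal.subset_span ⟨j, rfl⟩
  -- Y is multiplicative-ish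
  have hYmul : ∀ (b : Finset (Fin n)) (i : Fin n),
      Y b * π (X (Sum.inl i)) = if i ∈ b then Y b else Y (insert i b) := by
    intro b i
    by_cases hib : i ∈ b
    · rw [if_pos hib, hY]
      simp only
      rw [← map_mul]
      rw [show ((∏ x ∈ b, X (Sum.inl x)) * X (Sum.inl i) : MvPolynomial (Fin n ⊕ Fin p) ℂ)
        = (X (Sum.inl i) * X (Sum.inl i)) * ∏ x ∈ b.erase i, X (Sum.inl x) by
          rw [← Finset.mul_prod_erase b _ hib]; ring]
      rw [map_mul, hX2 i, ← map_mul]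
      exact congrArg π (Finset.mul_prod_erase b (fun x => X (Sum.inl x)) hib)
    · rw [if_neg hib, hY]
      simp only
      rw [Finset.prod_insert hib, map_mul, mul_comm]
  -- values at common zeros are 0/1
  have hz01 : ∀ z : (Fin n ⊕ Fin p) → ℂ, (∀ j : Fin s, eval z (f j) = 0) →
      ∀ i : Fin n, z (Sum.inl i) = 0 ∨ z (Sum.inl i) = 1 := by
    intro z hz i
    obtain ⟨j, hj⟩ := hind i
    have h0 := hz j
    rw [hj] at h0
    simp only [map_sub, map_pow, eval_X] at h0
    have h1 : z (Sum.inl i) * (z (Sum.inl i) - 1) = 0 := by linear_combination h0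
    rcases mul_eq_zero.1 h1 with h | h
    · exact Or.inl h
    · exact Or.inr (by linear_combination h)
  -- Y c = 0 for c ∉ B
  have hYzero : ∀ c : Finset (Fin n), ¬ InB n p s f c → Y c = 0 := by
    intro c hc
    have hrad : (∏ i ∈ c, X (Sum.inl i)) ∈ I.radical := by
      rw [hI, ← MvPolynomial.vanishingIdeal_zeroLocus_eq_radical (K := ℂ)]
      rw [MvPolynomial.mem_vanishingIdeal_iff]
      intro z hzI
      have hz' : ∀ j : Fin s, eval z (f j) = 0 := fun j =>
        (MvPolynomial.mem_zeroLocus_iff).1 hzI (f j) (Ideal.subset_span ⟨j, rfl⟩)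
      set d : Finset (Fin n) := Finset.univ.filter (fun i => z (Sum.inl i) = 1) with hd
      have hInBd : InB n p s f d := by
        refine ⟨z, hz', fun i => ?_⟩
        by_cases h : z (Sum.inl i) = 1
        · simp [hd, h]
        · rcases hz01 z hz' i with h0 | h1
          · simp [hd, h, h0]
          · exact absurd h1 h
      have hnsub : ¬ c ⊆ d := fun hsub => hc (hclosed.2 d hInBd c hsub)
      obtain ⟨i, hic, hid⟩ := Finset.not_subset.1 hnsub
      have hzi : z (Sum.inl i) = 0 := by
        rcases hz01 z hz' i with h0 | h1
        · exact h0
        · exact absurd (by simp [hd, h1] : i ∈ d) hid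
      rw [map_prod]
      exact Finset.prod_eq_zero hic (by simp [hzi])
    have hYc2 : Y c * Y c = Y c := by
      rw [hY]
      simp only
      rw [← map_mul, ← Finset.prod_mul_distrib, map_prod, map_prod]
      exact Finset.prod_congr rfl fun i _ => hX2 i
    have hYpow : ∀ k : ℕ, Y c ^ (k + 1) = Y c := by
      intro k
      induction k with
      | zero => rw [pow_one]
      | succ k ih => rw [pow_succ, ih, hYc2]
    obtain ⟨k, hk⟩ := (Ideal.mem_radical_iff).1 hrad
    rcases k with _ | k
    · rw [pow_zero] at hk
      have h1 : (1 : MvPolynomial (Fin n ⊕ Fin p) ℂ ⧸ I) = 0 := by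
        rw [← map_one π, hπ, Ideal.Quotient.eq_zero_iff_mem]
        exact hk
      rw [← mul_one (Y c), h1, mul_zero]
    · have : π ((∏ i ∈ c, X (Sum.inl i)) ^ (k + 1)) = 0 := by
        rw [hπ, Ideal.Quotient.eq_zero_iff_mem]
        exact hk
      rw [map_pow] at this
      rw [← hYpow k]
      exact this
  -- card ≠ m on B
  have hcard_ne : ∀ b ∈ Bs, b.card ≠ m := by
    intro b hb hbm
    obtain ⟨z, hz1, hz2⟩ := (hBs_mem b).1 hb
    apply hinf
    refine ⟨z, ?_, hz1⟩
    rw [hF₁, map_sub, map_sum]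
    simp only [eval_X, hz2, map_natCast]
    rw [Finset.sum_ite_mem, Finset.univ_inter, Finset.sum_const, nsmul_eq_mul, mul_one,
      ← hbm, sub_self]
  -- gam nonzero on B
  have hgam_ne : ∀ b ∈ Bs, gam m b.card ≠ 0 := by
    have key : ∀ k : ℕ, (∃ b ∈ Bs, b.card = k) → gam m k ≠ 0 := by
      intro k
      induction k with
      | zero =>
          intro _
          show -1 / (m : ℂ) ≠ 0
          exact div_ne_zero (neg_ne_zero.2 one_ne_zero) (Nat.cast_ne_zero.2 hm.ne')
      | succ k ih =>
          rintro ⟨b, hb, hbk⟩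
          have hbne : b.Nonempty := Finset.card_pos.1 (by omega)
          obtain ⟨i, hi⟩ := hbne
          have hb' : b.erase i ∈ Bs := (hBs_mem _).2
            (hclosed.2 b ((hBs_mem b).1 hb) _ (Finset.erase_subset i b))
          have hck : (b.erase i).card = k := by
            rw [Finset.card_erase_of_mem hi, hbk]; omega
          have hgk := ih ⟨b.erase i, hb', hck⟩
          show -((k+1 : ℕ) : ℂ) * gam m k / (((k+1 : ℕ) : ℂ) - (m : ℂ)) ≠ 0
          apply div_ne_zero
          · exact mul_ne_zero (neg_ne_zero.2 (Nat.cast_ne_zero.2 (Nat.succ_ne_zero k))) hgk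
          · refine sub_ne_zero.2 fun hE => ?_
            exact (hbk ▸ hcard_ne b hb) (Nat.cast_injective hE)
    intro b hb
    exact key b.card ⟨b, hb, rfl⟩
  -- the certificate polynomial
  set β₁ : MvPolynomial (Fin n ⊕ Fin p) ℂ := ∑ b ∈ Bs, monomial (e b) (gam m b.card) with hβ₁
  -- splitting lemma
  have hsplit : ∀ b : Finset (Fin n), Y b * (∑ i : Fin n, π (X (Sum.inl i)))
      = (b.card : MvPolynomial (Fin n ⊕ Fin p) ℂ ⧸ I) * Y b + ∑ i ∈ bᶜ, Y (insert i b) := by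
    intro b
    rw [Finset.mul_sum]
    calc ∑ i : Fin n, Y b * π (X (Sum.inl i))
        = ∑ i : Fin n, (if i ∈ b then Y b else Y (insert i b)) :=
          Finset.sum_congr rfl (fun i _ => hYmul b i)
      _ = ∑ i ∈ Finset.univ.filter (· ∈ b), Y b
            + ∑ i ∈ Finset.univ.filter (¬ · ∈ b), Y (insert i b) := by rw [Finset.sum_ite]
      _ = (b.card : MvPolynomial (Fin n ⊕ Fin p) ℂ ⧸ I) * Y b + ∑ i ∈ bᶜ, Y (insert i b) := by
          congr 1
          · rw [Finset.filter_univ_mem, Finset.sum_const, nsmul_eq_mul]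
          · congr 1
            ext i
            simp
  have hCnat : ∀ k : ℕ, ((k : MvPolynomial (Fin n ⊕ Fin p) ℂ ⧸ I)) = π (C (k : ℂ)) := by
    intro k
    rw [map_natCast C, map_natCast π]
  have hC : ∀ z w : ℂ, π (C z) * π (C w) = π (C (z * w)) := by
    intro z w
    rw [← map_mul, ← map_mul]
  -- the reindexing
  have hreidx : (∑ x ∈ (Bs.sigma fun b => bᶜ), π (C (gam m x.1.card)) * Y (insert x.2 x.1))
      = ∑ x ∈ (Bs.sigma fun d => (d : Finset (Fin n))),
          π (C (gam m (x.1.card - 1))) * Y x.1 := by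
    rw [← Finset.sum_filter_of_ne
      (p := fun x : Σ _ : Finset (Fin n), Fin n => insert x.2 x.1 ∈ Bs) ?hp]
    case hp =>
      rintro ⟨b, i⟩ _ hne
      by_contra hni
      exact hne (by rw [hYzero _ (fun h => hni ((hBs_mem _).2 h)), mul_zero])
    refine Finset.sum_nbij' (fun x => ⟨insert x.2 x.1, x.2⟩) (fun x => ⟨x.1.erase x.2, x.2⟩)
      ?_ ?_ ?_ ?_ ?_
    · rintro ⟨b, i⟩ hx
      rw [Finset.mem_filter, Finset.mem_sigma] at hx
      exact Finset.mem_sigma.2 ⟨hx.2, Finset.mem_insert_self _ _⟩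
    · rintro ⟨d, i⟩ hx
      rw [Finset.mem_sigma] at hx
      rw [Finset.mem_filter, Finset.mem_sigma]
      refine ⟨⟨?_, ?_⟩, ?_⟩
      · exact (hBs_mem _).2 (hclosed.2 d ((hBs_mem d).1 hx.1) _ (Finset.erase_subset _ _))
      · simp
      · rw [Finset.insert_erase hx.2]; exact hx.1
    · rintro ⟨b, i⟩ hx
      rw [Finset.mem_filter, Finset.mem_sigma] at hx
      have hib : i ∉ b := by simpa using hx.1.2
      simp [Finset.erase_insert hib]
    · rintro ⟨d, i⟩ hx
      rw [Finset.mem_sigma] at hx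
      simp [Finset.insert_erase hx.2]
    · rintro ⟨b, i⟩ hx
      rw [Finset.mem_filter, Finset.mem_sigma] at hx
      have hib : i ∉ b := by simpa using hx.1.2
      simp only
      rw [Finset.card_insert_of_notMem hib, Nat.add_sub_cancel]
  -- β₁ in the quotient
  have hβπ : π β₁ = ∑ b ∈ Bs, π (C (gam m b.card)) * Y b := by
    rw [hβ₁, map_sum]
    refine Finset.sum_congr rfl fun b hb => ?_
    rw [he]
    simp only
    rw [monomial_eq_prod n p b (gam m b.card), map_mul]
  -- coefficient identity
  have hκ : ∀ d ∈ Bs, ((d.card : ℂ) - m) * gam m d.card + (d.card : ℂ) * gam m (d.card - 1)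
      = if d = ∅ then 1 else 0 := by
    intro d hd
    by_cases hdE : d = ∅
    · subst hdE
      rw [if_pos rfl]
      simp only [Finset.card_empty, Nat.cast_zero, gam]
      have hm0 : (m : ℂ) ≠ 0 := Nat.cast_ne_zero.2 hm.ne'
      field_simp
      ring
    · obtain ⟨k, hk⟩ : ∃ k, d.card = k + 1 :=
        Nat.exists_eq_succ_of_ne_zero (fun h0 => hdE (Finset.card_eq_zero.1 h0))
      rw [if_neg hdE, hk]
      have hne : ((k+1 : ℕ) : ℂ) - (m : ℂ) ≠ 0 := by
        refine sub_ne_zero.2 fun hE => ?_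
        exact (hk ▸ hcard_ne d hd) (Nat.cast_injective hE)
      rw [Nat.add_sub_cancel]
      show ((((k+1 : ℕ) : ℂ)) - m) * (-((k+1 : ℕ) : ℂ) * gam m k / (((k+1 : ℕ) : ℂ) - (m : ℂ)))
          + ((k+1 : ℕ) : ℂ) * gam m k = 0
      rw [mul_comm, div_mul_cancel₀ _ hne]
      ring
  -- main identity in the quotient
  have hmain : π (β₁ * F₁) = 1 := by
    have hπF : π F₁ = (∑ i : Fin n, π (X (Sum.inl i))) - π (C (m : ℂ)) := by
      rw [hF₁, map_sub, map_sum, map_natCast, hCnat]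
    rw [map_mul, hβπ, hπF, Finset.sum_mul]
    have hterm : ∀ b ∈ Bs,
        π (C (gam m b.card)) * Y b * ((∑ i : Fin n, π (X (Sum.inl i))) - π (C (m : ℂ)))
        = π (C (((b.card : ℂ) - m) * gam m b.card)) * Y b
          + ∑ i ∈ bᶜ, π (C (gam m b.card)) * Y (insert i b) := by
      intro b hb
      calc π (C (gam m b.card)) * Y b * ((∑ i : Fin n, π (X (Sum.inl i))) - π (C (m : ℂ)))
          = π (C (gam m b.card)) * (Y b * (∑ i : Fin n, π (X (Sum.inl i))))
            - π (C (gam m b.card)) * π (C (m : ℂ)) * Y b := by ring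
        _ = π (C (gam m b.card))
              * ((b.card : MvPolynomial (Fin n ⊕ Fin p) ℂ ⧸ I) * Y b + ∑ i ∈ bᶜ, Y (insert i b))
            - π (C (gam m b.card)) * π (C (m : ℂ)) * Y b := by rw [hsplit b]
        _ = (π (C (gam m b.card)) * π (C ((b.card : ℂ)))
              - π (C (gam m b.card)) * π (C (m : ℂ))) * Y b
            + ∑ i ∈ bᶜ, π (C (gam m b.card)) * Y (insert i b) := by
            rw [hCnat b.card, ← Finset.mul_sum]; ring
        _ = π (C (((b.card : ℂ) - m) * gam m b.card)) * Y b
            + ∑ i ∈ bᶜ, π (C (gam m b.card)) * Y (insert i b) := by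
            rw [hC, hC, ← map_sub, ← map_sub]
            congr 3
            ring
    rw [Finset.sum_congr rfl hterm, Finset.sum_add_distrib]
    have h2 : ∑ b ∈ Bs, ∑ i ∈ bᶜ, π (C (gam m b.card)) * Y (insert i b)
        = ∑ d ∈ Bs, π (C ((d.card : ℂ) * gam m (d.card - 1))) * Y d := by
      rw [Finset.sum_sigma', hreidx, Finset.sum_sigma]
      refine Finset.sum_congr rfl fun d hd => ?_
      calc ∑ _i ∈ d, π (C (gam m (d.card - 1))) * Y d
          = d.card • (π (C (gam m (d.card - 1))) * Y d) := Finset.sum_const _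
        _ = π (C ((d.card : ℂ) * gam m (d.card - 1))) * Y d := by
            rw [nsmul_eq_mul, hCnat d.card, ← mul_assoc, hC]
    rw [h2, ← Finset.sum_add_distrib]
    have h3 : ∀ d ∈ Bs,
        π (C (((d.card : ℂ) - m) * gam m d.card)) * Y d
          + π (C ((d.card : ℂ) * gam m (d.card - 1))) * Y d
        = if d = ∅ then Y ∅ else 0 := by
      intro d hd
      rw [← add_mul, ← map_add, ← map_add, hκ d hd]
      by_cases hdE : d = ∅
      · subst hdE
        rw [if_pos rfl, if_pos rfl, map_one, map_one, one_mul]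
      · rw [if_neg hdE, if_neg hdE, map_zero, map_zero, zero_mul]
    rw [Finset.sum_congr rfl h3, Finset.sum_ite_eq' Bs ∅ (fun _ => Y ∅), if_pos hempty, hY]
    simp
  -- membership
  have hmem : (1 : MvPolynomial (Fin n ⊕ Fin p) ℂ) - β₁ * F₁ ∈ I := by
    have : π (β₁ * F₁) = π 1 := by rw [hmain, map_one]
    have h2 : β₁ * F₁ - 1 ∈ I := by rw [hπ] at this; exact (Ideal.Quotient.eq).1 this
    have := I.neg_mem h2
    simpa using this
  obtain ⟨β, hβ⟩ := (Ideal.mem_span_range_iff_exists_fun).1 (hI ▸ hmem)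
  have heval : ∀ (b : Finset (Fin n)) (j : Fin n),
      (e b) (Sum.inl j) = if j ∈ b then 1 else 0 := by
    intro b j
    rw [he]
    simp only
    rw [Finsupp.finset_sum_apply]
    simp [Finsupp.single_apply, Sum.inl.injEq]
  have heinj : ∀ b b' : Finset (Fin n), e b = e b' → b = b' := by
    intro b b' hE
    ext j
    have h := congrArg (fun g : (Fin n ⊕ Fin p) →₀ ℕ => g (Sum.inl j)) hE
    simp only [heval] at h
    by_cases h1 : j ∈ b <;> by_cases h2 : j ∈ b' <;> simp [h1, h2] at h ⊢
  refine ⟨β₁, β, ?_, ?_⟩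
  · rw [hβ]; ring
  · intro d
    have hcoeff : coeff d β₁ = ∑ b ∈ Bs, if e b = d then gam m b.card else 0 := by
      rw [hβ₁, MvPolynomial.coeff_sum]
      exact Finset.sum_congr rfl fun b _ => coeff_monomial d (e b) _
    rw [MvPolynomial.mem_support_iff, hcoeff]
    constructor
    · intro hne
      obtain ⟨b, hb, hbne⟩ := Finset.exists_ne_zero_of_sum_ne_zero hne
      have hEb : e b = d := by
        by_contra h
        simp [h] at hbne
      refine ⟨b, (hBs_mem b).1 hb, ?_⟩
      rw [← hEb, he]
    · rintro ⟨b, hb, rfl⟩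
      have hbBs : b ∈ Bs := (hBs_mem b).2 hb
      have heb : e b = ∑ i ∈ b, Finsupp.single (Sum.inl i) (1 : ℕ) := by rw [he]
      rw [Finset.sum_eq_single b]
      · rw [heb, if_pos rfl]
        exact hgam_ne b hbBs
      · intro b' hb' hne
        rw [if_neg]
        intro h
        exact hne (heinj b' b (by rw [h, heb]))
      · intro h
        exact absurd hbBs h
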